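/- There exists a constant C > 0 such that for every finitely supported function f : ℤ² → ℂ one has |Σ_{n∈ℤ²} conj(f(n)) · (Λ(n)·(A f)(n) − (A(Λ·f))(n))| ≤ C · Σ_{n∈ℤ²} Λ(n) |f(n)|², i.e. the commutator form ⟨f, [Λ(Q), A] f⟩ is bounded by C‖Λ^{1/2} f‖². -/

import Mathlib

open scoped ENNReal
open Filter

noncomputable section

/-- The Hilbert space `ℓ²(ℤ², ℂ)`. -/
abbrev H2 : Type := lp (fun _ : ℤ × ℤ => ℂ) 2

/-- The triangular-lattice Laplacian, acting pointwise on functions `ℤ² → ℂ`. -/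
def lapT (f : ℤ × ℤ → ℂ) : ℤ × ℤ → ℂ := fun n =>
  (1/6 : ℂ) * (f (n.1 + 1, n.2) + f (n.1 - 1, n.2) + f (n.1, n.2 + 1)
    + f (n.1, n.2 - 1) + f (n.1 + 1, n.2 - 1) + f (n.1 - 1, n.2 + 1))

/-- The symbol `F(x₁,x₂) = (1/3)(cos x₁ + cos x₂ + cos (x₁ - x₂))`. -/
def symbF (x : ℝ × ℝ) : ℝ := (1/3) * (Real.cos x.1 + Real.cos x.2 + Real.cos (x.1 - x.2))

/-- `∂₁ F`. -/
def d1F (x : ℝ × ℝ) : ℝ := -(1/3) * (Real.sin x.1 + Real.sin (x.1 - x.2))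

/-- `∂₂ F`. -/
def d2F (x : ℝ × ℝ) : ℝ := -(1/3) * (Real.sin x.2 - Real.sin (x.1 - x.2))

/-- Japanese bracket `⟨t⟩ = √(1/2 + t²)`. -/
def jap (t : ℝ) : ℝ := Real.sqrt (1/2 + t^2)

/-- The weight `Λ(n₁,n₂) = ⟨n₁⟩ + ⟨n₂⟩`. -/
def Lam (n : ℤ × ℤ) : ℝ := jap (n.1 : ℝ) + jap (n.2 : ℝ)

/-- The conjugate operator `A`, acting pointwise on functions `ℤ² → ℂ`. -/
def opA (f : ℤ × ℤ → ℂ) : ℤ × ℤ → ℂ := fun n =>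
  (Complex.I / 6) *
    (((n.1 : ℂ) + 1/2) * f (n.1 + 1, n.2) - ((n.1 : ℂ) - 1/2) * f (n.1 - 1, n.2)
      + ((n.2 : ℂ) + 1/2) * f (n.1, n.2 + 1) - ((n.2 : ℂ) - 1/2) * f (n.1, n.2 - 1)
      + ((n.2 : ℂ) - (n.1 : ℂ) + 1) * f (n.1 - 1, n.2 + 1)
      + ((n.1 : ℂ) - (n.2 : ℂ) + 1) * f (n.1 + 1, n.2 - 1))

/-- The perturbed Laplacian `Δ̃` with weight `m`, acting pointwise on functions `ℤ² → ℂ`: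
`(Δ̃ f)(n) = (1/6) Σ_{l ∼ n} f(l) / (√(m n) √(m l))`. -/
def lapPert (m : ℤ × ℤ → ℝ) (f : ℤ × ℤ → ℂ) : ℤ × ℤ → ℂ := fun n =>
  (1/6 : ℂ) *
    (f (n.1 + 1, n.2) / ((Real.sqrt (m n) * Real.sqrt (m (n.1 + 1, n.2)) : ℝ) : ℂ)
      + f (n.1 - 1, n.2) / ((Real.sqrt (m n) * Real.sqrt (m (n.1 - 1, n.2)) : ℝ) : ℂ)
      + f (n.1, n.2 + 1) / ((Real.sqrt (m n) * Real.sqrt (m (n.1, n.2 + 1)) : ℝ) : ℂ)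
      + f (n.1, n.2 - 1) / ((Real.sqrt (m n) * Real.sqrt (m (n.1, n.2 - 1)) : ℝ) : ℂ)
      + f (n.1 + 1, n.2 - 1) / ((Real.sqrt (m n) * Real.sqrt (m (n.1 + 1, n.2 - 1)) : ℝ) : ℂ)
      + f (n.1 - 1, n.2 + 1) / ((Real.sqrt (m n) * Real.sqrt (m (n.1 - 1, n.2 + 1)) : ℝ) : ℂ))

set_option maxHeartbeats 1000000

lemma jap_nonneg (t : ℝ) : 0 ≤ jap t := Real.sqrt_nonneg _

lemma jap_sq (t : ℝ) : jap t ^ 2 = 1/2 + t^2 := by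
  rw [jap, Real.sq_sqrt]; positivity

lemma abs_le_jap (t : ℝ) : |t| ≤ jap t := by
  rw [jap, ← Real.sqrt_sq_eq_abs]
  exact Real.sqrt_le_sqrt (by linarith)

lemma half_le_jap (t : ℝ) : (1/2 : ℝ) ≤ jap t := by
  rw [jap]
  have h : Real.sqrt ((1/2)^2) ≤ Real.sqrt (1/2 + t^2) :=
    Real.sqrt_le_sqrt (by nlinarith [sq_nonneg t])
  rwa [Real.sqrt_sq (by norm_num)] at h

lemma jap_lip (a b : ℝ) : |jap a - jap b| ≤ |a - b| := by
  have hsum : 0 < jap a + jap b := by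
    have := half_le_jap a; have := half_le_jap b; linarith
  have key : (jap a - jap b) * (jap a + jap b) = (a - b) * (a + b) := by
    have h1 := jap_sq a; have h2 := jap_sq b; nlinarith [h1, h2]
  have habsum : |a + b| ≤ jap a + jap b := by
    have := abs_le_jap a; have := abs_le_jap b
    calc |a + b| ≤ |a| + |b| := abs_add_le a b
      _ ≤ _ := by linarith
  have h1 : |jap a - jap b| * (jap a + jap b) = |a - b| * |a + b| := by
    rw [show |jap a - jap b| * (jap a + jap b) = |(jap a - jap b) * (jap a + jap b)| by
      rw [abs_mul, abs_of_pos hsum], key, abs_mul]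
  have h2 : |a - b| * |a + b| ≤ |a - b| * (jap a + jap b) :=
    mul_le_mul_of_nonneg_left habsum (abs_nonneg _)
  exact (mul_le_mul_iff_left₀ hsum).mp (by linarith)

lemma one_le_Lam (n : ℤ × ℤ) : 1 ≤ Lam n := by
  have := half_le_jap (n.1 : ℝ); have := half_le_jap (n.2 : ℝ)
  unfold Lam; linarith

lemma Lam_pos (n : ℤ × ℤ) : 0 < Lam n := lt_of_lt_of_le one_pos (one_le_Lam n)

lemma Lam_diff_le (n m : ℤ × ℤ) (h1 : |(n.1:ℝ) - (m.1:ℝ)| ≤ 1) (h2 : |(n.2:ℝ) - (m.2:ℝ)| ≤ 1) :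
    |Lam n - Lam m| ≤ 2 := by
  have u := (jap_lip (n.1:ℝ) (m.1:ℝ)).trans h1
  have v := (jap_lip (n.2:ℝ) (m.2:ℝ)).trans h2
  have : Lam n - Lam m = (jap (n.1:ℝ) - jap (m.1:ℝ)) + (jap (n.2:ℝ) - jap (m.2:ℝ)) := by
    unfold Lam; ring
  rw [this]
  calc |_| ≤ |jap (n.1:ℝ) - jap (m.1:ℝ)| + |jap (n.2:ℝ) - jap (m.2:ℝ)| := abs_add_le _ _
    _ ≤ 2 := by linarith

lemma Lam_le_three (n m : ℤ × ℤ) (h : |Lam n - Lam m| ≤ 2) : Lam n ≤ 3 * Lam m := by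
  have := one_le_Lam m
  have := (abs_le.mp h).2
  linarith

lemma abs_add6 (a b c d e g : ℂ) : ‖a+b+c+d+e+g‖ ≤
    ‖a‖ + ‖b‖ + ‖c‖ + ‖d‖ + ‖e‖
      + ‖g‖ := by
  have h1 := norm_add_le a b
  have h2 := norm_add_le (a+b) c
  have h3 := norm_add_le (a+b+c) d
  have h4 := norm_add_le (a+b+c+d) e
  have h5 := norm_add_le (a+b+c+d+e) g
  linarith

lemma term_abs (c : ℂ) (r : ℝ) (z : ℂ) :
    ‖c * (r : ℂ) * z‖ = ‖c‖ * |r| * ‖z‖ := by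
  rw [norm_mul, norm_mul, Complex.norm_real, Real.norm_eq_abs]

lemma coeff1 (n : ℤ × ℤ) : ‖(n.1 : ℂ) + 1/2‖ ≤ 2 * Lam n := by
  have : ((n.1 : ℂ) + 1/2) = (((n.1 : ℝ) + 1/2 : ℝ) : ℂ) := by push_cast; ring
  rw [this, Complex.norm_real, Real.norm_eq_abs]
  have h1 := abs_le_jap (n.1 : ℝ); have h2 := half_le_jap (n.2 : ℝ)
  have h0 : |(1/2:ℝ)| = 1/2 := abs_of_pos (by norm_num)
  have h3 : |(n.1:ℝ) + 1/2| ≤ |(n.1:ℝ)| + 1/2 := by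
    have := abs_add_le ((n.1:ℝ)) (1/2); linarith
  have h4 := half_le_jap (n.1 : ℝ)
  unfold Lam; linarith [abs_nonneg ((n.1:ℝ))]

lemma coeff2 (n : ℤ × ℤ) : ‖(n.1 : ℂ) - 1/2‖ ≤ 2 * Lam n := by
  have : ((n.1 : ℂ) - 1/2) = (((n.1 : ℝ) - 1/2 : ℝ) : ℂ) := by push_cast; ring
  rw [this, Complex.norm_real, Real.norm_eq_abs]
  have h1 := abs_le_jap (n.1 : ℝ); have h2 := half_le_jap (n.2 : ℝ)
  have h0 : |(1/2:ℝ)| = 1/2 := abs_of_pos (by norm_num)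
  have h3 : |(n.1:ℝ) - 1/2| ≤ |(n.1:ℝ)| + 1/2 := by
    have := abs_sub ((n.1:ℝ)) (1/2); linarith
  have h4 := half_le_jap (n.1 : ℝ)
  unfold Lam; linarith

lemma coeff3 (n : ℤ × ℤ) : ‖(n.2 : ℂ) + 1/2‖ ≤ 2 * Lam n := by
  have : ((n.2 : ℂ) + 1/2) = (((n.2 : ℝ) + 1/2 : ℝ) : ℂ) := by push_cast; ring
  rw [this, Complex.norm_real, Real.norm_eq_abs]
  have h1 := abs_le_jap (n.2 : ℝ); have h2 := half_le_jap (n.1 : ℝ)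
  have h0 : |(1/2:ℝ)| = 1/2 := abs_of_pos (by norm_num)
  have h3 : |(n.2:ℝ) + 1/2| ≤ |(n.2:ℝ)| + 1/2 := by
    have := abs_add_le ((n.2:ℝ)) (1/2); linarith
  have h4 := half_le_jap (n.2 : ℝ)
  unfold Lam; linarith

lemma coeff4 (n : ℤ × ℤ) : ‖(n.2 : ℂ) - 1/2‖ ≤ 2 * Lam n := by
  have : ((n.2 : ℂ) - 1/2) = (((n.2 : ℝ) - 1/2 : ℝ) : ℂ) := by push_cast; ring
  rw [this, Complex.norm_real, Real.norm_eq_abs]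
  have h1 := abs_le_jap (n.2 : ℝ); have h2 := half_le_jap (n.1 : ℝ)
  have h0 : |(1/2:ℝ)| = 1/2 := abs_of_pos (by norm_num)
  have h3 : |(n.2:ℝ) - 1/2| ≤ |(n.2:ℝ)| + 1/2 := by
    have := abs_sub ((n.2:ℝ)) (1/2); linarith
  have h4 := half_le_jap (n.2 : ℝ)
  unfold Lam; linarith

lemma coeff5 (n : ℤ × ℤ) : ‖(n.2 : ℂ) - (n.1 : ℂ) + 1‖ ≤ 2 * Lam n := by
  have : ((n.2 : ℂ) - (n.1 : ℂ) + 1) = (((n.2 : ℝ) - (n.1 : ℝ) + 1 : ℝ) : ℂ) := by push_cast; ring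
  rw [this, Complex.norm_real, Real.norm_eq_abs]
  have h1 := abs_le_jap (n.1 : ℝ); have h2 := abs_le_jap (n.2 : ℝ)
  have h3 := half_le_jap (n.1 : ℝ); have h4 := half_le_jap (n.2 : ℝ)
  have h5 : |(n.2:ℝ) - (n.1:ℝ) + 1| ≤ |(n.2:ℝ)| + |(n.1:ℝ)| + 1 := by
    calc |(n.2:ℝ) - (n.1:ℝ) + 1| ≤ |(n.2:ℝ) - (n.1:ℝ)| + |(1:ℝ)| := abs_add_le _ _
      _ ≤ |(n.2:ℝ)| + |(n.1:ℝ)| + 1 := by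
          have := abs_sub ((n.2:ℝ)) ((n.1:ℝ)); norm_num; linarith
  unfold Lam; linarith

lemma coeff6 (n : ℤ × ℤ) : ‖(n.1 : ℂ) - (n.2 : ℂ) + 1‖ ≤ 2 * Lam n := by
  have : ((n.1 : ℂ) - (n.2 : ℂ) + 1) = (((n.1 : ℝ) - (n.2 : ℝ) + 1 : ℝ) : ℂ) := by push_cast; ring
  rw [this, Complex.norm_real, Real.norm_eq_abs]
  have h1 := abs_le_jap (n.1 : ℝ); have h2 := abs_le_jap (n.2 : ℝ)
  have h3 := half_le_jap (n.1 : ℝ); have h4 := half_le_jap (n.2 : ℝ)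
  have h5 : |(n.1:ℝ) - (n.2:ℝ) + 1| ≤ |(n.1:ℝ)| + |(n.2:ℝ)| + 1 := by
    calc |(n.1:ℝ) - (n.2:ℝ) + 1| ≤ |(n.1:ℝ) - (n.2:ℝ)| + |(1:ℝ)| := abs_add_le _ _
      _ ≤ |(n.1:ℝ)| + |(n.2:ℝ)| + 1 := by
          have := abs_sub ((n.1:ℝ)) ((n.2:ℝ)); norm_num; linarith
  unfold Lam; linarith

lemma pointwise_bound (f : ℤ × ℤ → ℂ) (n : ℤ × ℤ) :
    ‖(Lam n : ℂ) * opA f n - opA (fun k => (Lam k : ℂ) * f k) n‖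
      ≤ Lam n * (‖f (n.1+1,n.2)‖ + ‖f (n.1-1,n.2)‖ + ‖f (n.1,n.2+1)‖
          + ‖f (n.1,n.2-1)‖ + ‖f (n.1-1,n.2+1)‖ + ‖f (n.1+1,n.2-1)‖) := by
  have key : (Lam n : ℂ) * opA f n - opA (fun k => (Lam k : ℂ) * f k) n
      = (Complex.I/6) *
        ( ((n.1:ℂ)+1/2) * (((Lam n - Lam (n.1+1,n.2) : ℝ)):ℂ) * f (n.1+1,n.2)
        + -(((n.1:ℂ)-1/2) * (((Lam n - Lam (n.1-1,n.2) : ℝ)):ℂ) * f (n.1-1,n.2))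
        + ((n.2:ℂ)+1/2) * (((Lam n - Lam (n.1,n.2+1) : ℝ)):ℂ) * f (n.1,n.2+1)
        + -(((n.2:ℂ)-1/2) * (((Lam n - Lam (n.1,n.2-1) : ℝ)):ℂ) * f (n.1,n.2-1))
        + ((n.2:ℂ)-(n.1:ℂ)+1) * (((Lam n - Lam (n.1-1,n.2+1) : ℝ)):ℂ) * f (n.1-1,n.2+1)
        + ((n.1:ℂ)-(n.2:ℂ)+1) * (((Lam n - Lam (n.1+1,n.2-1) : ℝ)):ℂ) * f (n.1+1,n.2-1)) := by
    simp only [opA]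
    push_cast
    ring
  rw [key, norm_mul]
  have hI : ‖Complex.I/6‖ = 1/6 := by simp [norm_div]
  rw [hI]
  -- Lam differences
  have hd1 : |Lam n - Lam (n.1+1,n.2)| ≤ 2 := by
    apply Lam_diff_le <;> push_cast <;> norm_num
  have hd2 : |Lam n - Lam (n.1-1,n.2)| ≤ 2 := by
    apply Lam_diff_le <;> push_cast <;> norm_num
  have hd3 : |Lam n - Lam (n.1,n.2+1)| ≤ 2 := by
    apply Lam_diff_le <;> push_cast <;> norm_num
  have hd4 : |Lam n - Lam (n.1,n.2-1)| ≤ 2 := by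
    apply Lam_diff_le <;> push_cast <;> norm_num
  have hd5 : |Lam n - Lam (n.1-1,n.2+1)| ≤ 2 := by
    apply Lam_diff_le <;> push_cast <;> norm_num
  have hd6 : |Lam n - Lam (n.1+1,n.2-1)| ≤ 2 := by
    apply Lam_diff_le <;> push_cast <;> norm_num
  have hL := Lam_pos n
  set x1 := ‖f (n.1+1,n.2)‖; set x2 := ‖f (n.1-1,n.2)‖; set x3 := ‖f (n.1,n.2+1)‖
  set x4 := ‖f (n.1,n.2-1)‖; set x5 := ‖f (n.1-1,n.2+1)‖; set x6 := ‖f (n.1+1,n.2-1)‖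
  have hx1 : (0:ℝ) ≤ x1 := norm_nonneg _
  have hx2 : (0:ℝ) ≤ x2 := norm_nonneg _
  have hx3 : (0:ℝ) ≤ x3 := norm_nonneg _
  have hx4 : (0:ℝ) ≤ x4 := norm_nonneg _
  have hx5 : (0:ℝ) ≤ x5 := norm_nonneg _
  have hx6 : (0:ℝ) ≤ x6 := norm_nonneg _
  have t1 : ‖((n.1:ℂ)+1/2) * (((Lam n - Lam (n.1+1,n.2) : ℝ)):ℂ) * f (n.1+1,n.2)‖
      ≤ 4 * Lam n * x1 := by
    rw [term_abs]
    calc ‖(n.1:ℂ)+1/2‖ * |Lam n - Lam (n.1+1,n.2)| * x1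
        ≤ (2 * Lam n) * 2 * x1 := by
          apply mul_le_mul _ le_rfl hx1 (by positivity)
          exact mul_le_mul (coeff1 n) hd1 (abs_nonneg _) (by positivity)
      _ = 4 * Lam n * x1 := by ring
  have t2 : ‖-(((n.1:ℂ)-1/2) * (((Lam n - Lam (n.1-1,n.2) : ℝ)):ℂ) * f (n.1-1,n.2))‖
      ≤ 4 * Lam n * x2 := by
    rw [norm_neg, term_abs]
    calc ‖(n.1:ℂ)-1/2‖ * |Lam n - Lam (n.1-1,n.2)| * x2
        ≤ (2 * Lam n) * 2 * x2 := by
          apply mul_le_mul _ le_rfl hx2 (by positivity)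
          exact mul_le_mul (coeff2 n) hd2 (abs_nonneg _) (by positivity)
      _ = 4 * Lam n * x2 := by ring
  have t3 : ‖((n.2:ℂ)+1/2) * (((Lam n - Lam (n.1,n.2+1) : ℝ)):ℂ) * f (n.1,n.2+1)‖
      ≤ 4 * Lam n * x3 := by
    rw [term_abs]
    calc ‖(n.2:ℂ)+1/2‖ * |Lam n - Lam (n.1,n.2+1)| * x3
        ≤ (2 * Lam n) * 2 * x3 := by
          apply mul_le_mul _ le_rfl hx3 (by positivity)
          exact mul_le_mul (coeff3 n) hd3 (abs_nonneg _) (by positivity)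
      _ = 4 * Lam n * x3 := by ring
  have t4 : ‖-(((n.2:ℂ)-1/2) * (((Lam n - Lam (n.1,n.2-1) : ℝ)):ℂ) * f (n.1,n.2-1))‖
      ≤ 4 * Lam n * x4 := by
    rw [norm_neg, term_abs]
    calc ‖(n.2:ℂ)-1/2‖ * |Lam n - Lam (n.1,n.2-1)| * x4
        ≤ (2 * Lam n) * 2 * x4 := by
          apply mul_le_mul _ le_rfl hx4 (by positivity)
          exact mul_le_mul (coeff4 n) hd4 (abs_nonneg _) (by positivity)
      _ = 4 * Lam n * x4 := by ring
  have t5 : ‖((n.2:ℂ)-(n.1:ℂ)+1) * (((Lam n - Lam (n.1-1,n.2+1) : ℝ)):ℂ) * f (n.1-1,n.2+1)‖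
      ≤ 4 * Lam n * x5 := by
    rw [term_abs]
    calc ‖(n.2:ℂ)-(n.1:ℂ)+1‖ * |Lam n - Lam (n.1-1,n.2+1)| * x5
        ≤ (2 * Lam n) * 2 * x5 := by
          apply mul_le_mul _ le_rfl hx5 (by positivity)
          exact mul_le_mul (coeff5 n) hd5 (abs_nonneg _) (by positivity)
      _ = 4 * Lam n * x5 := by ring
  have t6 : ‖((n.1:ℂ)-(n.2:ℂ)+1) * (((Lam n - Lam (n.1+1,n.2-1) : ℝ)):ℂ) * f (n.1+1,n.2-1)‖
      ≤ 4 * Lam n * x6 := by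
    rw [term_abs]
    calc ‖(n.1:ℂ)-(n.2:ℂ)+1‖ * |Lam n - Lam (n.1+1,n.2-1)| * x6
        ≤ (2 * Lam n) * 2 * x6 := by
          apply mul_le_mul _ le_rfl hx6 (by positivity)
          exact mul_le_mul (coeff6 n) hd6 (abs_nonneg _) (by positivity)
      _ = 4 * Lam n * x6 := by ring
  have tri := abs_add6
    (((n.1:ℂ)+1/2) * (((Lam n - Lam (n.1+1,n.2) : ℝ)):ℂ) * f (n.1+1,n.2))
    (-(((n.1:ℂ)-1/2) * (((Lam n - Lam (n.1-1,n.2) : ℝ)):ℂ) * f (n.1-1,n.2)))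
    (((n.2:ℂ)+1/2) * (((Lam n - Lam (n.1,n.2+1) : ℝ)):ℂ) * f (n.1,n.2+1))
    (-(((n.2:ℂ)-1/2) * (((Lam n - Lam (n.1,n.2-1) : ℝ)):ℂ) * f (n.1,n.2-1)))
    (((n.2:ℂ)-(n.1:ℂ)+1) * (((Lam n - Lam (n.1-1,n.2+1) : ℝ)):ℂ) * f (n.1-1,n.2+1))
    (((n.1:ℂ)-(n.2:ℂ)+1) * (((Lam n - Lam (n.1+1,n.2-1) : ℝ)):ℂ) * f (n.1+1,n.2-1))
  have p1 := mul_nonneg hL.le hx1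
  have p2 := mul_nonneg hL.le hx2
  have p3 := mul_nonneg hL.le hx3
  have p4 := mul_nonneg hL.le hx4
  have p5 := mul_nonneg hL.le hx5
  have p6 := mul_nonneg hL.le hx6
  linarith [tri, t1, t2, t3, t4, t5, t6]

lemma supp_summable {f : ℤ × ℤ → ℂ} (hf : (Function.support f).Finite)
    (g : ℤ × ℤ → ℝ) (hg : ∀ n, f n = 0 → g n = 0) : Summable g :=
  summable_of_finite_support (hf.subset (fun n hn => by
    simp only [Function.mem_support] at hn ⊢
    exact fun h0 => hn (hg n h0)))

lemma cross_sum {f : ℤ × ℤ → ℂ} (hf : (Function.support f).Finite) (e : ℤ × ℤ)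
    (he1 : |(e.1:ℝ)| ≤ 1) (he2 : |(e.2:ℝ)| ≤ 1) :
    ∑' n : ℤ × ℤ, Lam n * (‖f n‖ * ‖f (n + e)‖) ≤ 2 * ∑' n : ℤ × ℤ, Lam n * ‖f n‖^2 := by
  have hS : Summable (fun n : ℤ × ℤ => Lam n * ‖f n‖^2) :=
    supp_summable hf _ (fun n h0 => by simp [h0])
  have hSe : Summable (fun n : ℤ × ℤ => Lam (n + e) * ‖f (n + e)‖^2) :=
    (Equiv.addRight e).summable_iff.mpr hS
  have hL : Summable (fun n : ℤ × ℤ => Lam n * (‖f n‖ * ‖f (n + e)‖)) :=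
    supp_summable hf _ (fun n h0 => by simp [h0])
  have hpt : ∀ n : ℤ × ℤ, Lam n * (‖f n‖ * ‖f (n + e)‖)
      ≤ (1/2) * (Lam n * ‖f n‖^2) + (3/2) * (Lam (n + e) * ‖f (n + e)‖^2) := by
    intro n
    have hcmp : Lam n ≤ 3 * Lam (n + e) := by
      apply Lam_le_three
      apply Lam_diff_le
      · simp only [Prod.fst_add]; push_cast; simpa using he1
      · simp only [Prod.snd_add]; push_cast; simpa using he2
    have hx : (0:ℝ) ≤ ‖f n‖ := norm_nonneg _
    have hy : (0:ℝ) ≤ ‖f (n + e)‖ := norm_nonneg _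
    have hLn := (Lam_pos n).le
    nlinarith [mul_nonneg hLn (sq_nonneg (‖f n‖ - ‖f (n + e)‖)),
      mul_le_mul_of_nonneg_right hcmp (sq_nonneg (‖f (n + e)‖))]
  calc ∑' n : ℤ × ℤ, Lam n * (‖f n‖ * ‖f (n + e)‖)
      ≤ ∑' n : ℤ × ℤ, ((1/2) * (Lam n * ‖f n‖^2) + (3/2) * (Lam (n + e) * ‖f (n + e)‖^2)) :=
        Summable.tsum_le_tsum hpt hL ((hS.mul_left _).add (hSe.mul_left _))
    _ = (1/2) * ∑' n : ℤ × ℤ, Lam n * ‖f n‖^2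
        + (3/2) * ∑' n : ℤ × ℤ, Lam (n + e) * ‖f (n + e)‖^2 := by
        rw [Summable.tsum_add (hS.mul_left _) (hSe.mul_left _), tsum_mul_left, tsum_mul_left]
    _ = 2 * ∑' n : ℤ × ℤ, Lam n * ‖f n‖^2 := by
        have ht := (Equiv.addRight e).tsum_eq (fun n : ℤ × ℤ => Lam n * ‖f n‖^2)
        simp only [Equiv.coe_addRight] at ht
        rw [ht]; ring

/-- the commutator form `⟨f, [Λ(Q), A] f⟩` is bounded by `C ‖Λ^{1/2} f‖²`. -/
theorem commutator_weight_opA_bound :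
    ∃ C > 0, ∀ f : ℤ × ℤ → ℂ, (Function.support f).Finite →
      ‖∑' n : ℤ × ℤ, (starRingEnd ℂ) (f n) *
          ((Lam n : ℂ) * opA f n - opA (fun k => (Lam k : ℂ) * f k) n)‖
        ≤ C * ∑' n : ℤ × ℤ, Lam n * ‖f n‖ ^ 2 := by
  refine ⟨12, by norm_num, ?_⟩
  intro f hf
  set S := ∑' n : ℤ × ℤ, Lam n * ‖f n‖ ^ 2 with hSdef
  set D : ℤ × ℤ → ℂ := fun n => (Lam n : ℂ) * opA f n - opA (fun k => (Lam k : ℂ) * f k) n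
    with hD
  set g1 : ℤ × ℤ → ℝ := fun n => Lam n * (‖f n‖ * ‖f (n.1+1, n.2)‖) with hg1
  set g2 : ℤ × ℤ → ℝ := fun n => Lam n * (‖f n‖ * ‖f (n.1-1, n.2)‖) with hg2
  set g3 : ℤ × ℤ → ℝ := fun n => Lam n * (‖f n‖ * ‖f (n.1, n.2+1)‖) with hg3
  set g4 : ℤ × ℤ → ℝ := fun n => Lam n * (‖f n‖ * ‖f (n.1, n.2-1)‖) with hg4
  set g5 : ℤ × ℤ → ℝ := fun n => Lam n * (‖f n‖ * ‖f (n.1-1, n.2+1)‖) with hg5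
  set g6 : ℤ × ℤ → ℝ := fun n => Lam n * (‖f n‖ * ‖f (n.1+1, n.2-1)‖) with hg6
  have s1 : Summable g1 := supp_summable hf _ (fun n h0 => by simp [hg1, h0])
  have s2 : Summable g2 := supp_summable hf _ (fun n h0 => by simp [hg2, h0])
  have s3 : Summable g3 := supp_summable hf _ (fun n h0 => by simp [hg3, h0])
  have s4 : Summable g4 := supp_summable hf _ (fun n h0 => by simp [hg4, h0])
  have s5 : Summable g5 := supp_summable hf _ (fun n h0 => by simp [hg5, h0])
  have s6 : Summable g6 := supp_summable hf _ (fun n h0 => by simp [hg6, h0])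
  have hnorm : ∀ n : ℤ × ℤ, ‖(starRingEnd ℂ) (f n) * D n‖ ≤
      g1 n + g2 n + g3 n + g4 n + g5 n + g6 n := by
    intro n
    rw [norm_mul, RCLike.norm_conj]
    have hpb := pointwise_bound f n
    calc ‖f n‖ * ‖D n‖
        ≤ ‖f n‖ * (Lam n * (‖f (n.1+1,n.2)‖ + ‖f (n.1-1,n.2)‖ + ‖f (n.1,n.2+1)‖
          + ‖f (n.1,n.2-1)‖ + ‖f (n.1-1,n.2+1)‖ + ‖f (n.1+1,n.2-1)‖)) :=
          mul_le_mul_of_nonneg_left hpb (norm_nonneg _)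
      _ = g1 n + g2 n + g3 n + g4 n + g5 n + g6 n := by
          simp only [hg1, hg2, hg3, hg4, hg5, hg6]; ring
  have hgsum : Summable (fun n : ℤ × ℤ => ‖(starRingEnd ℂ) (f n) * D n‖) :=
    supp_summable hf _ (fun n h0 => by simp [h0])
  have habs : ‖∑' n : ℤ × ℤ, (starRingEnd ℂ) (f n) * D n‖
      ≤ ∑' n : ℤ × ℤ, ‖(starRingEnd ℂ) (f n) * D n‖ := by
    exact norm_tsum_le_tsum_norm hgsum
  have hstep : ∑' n : ℤ × ℤ, ‖(starRingEnd ℂ) (f n) * D n‖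
      ≤ ∑' n : ℤ × ℤ, (g1 n + g2 n + g3 n + g4 n + g5 n + g6 n) :=
    Summable.tsum_le_tsum hnorm hgsum (((((s1.add s2).add s3).add s4).add s5).add s6)
  have hsplit : ∑' n : ℤ × ℤ, (g1 n + g2 n + g3 n + g4 n + g5 n + g6 n)
      = (∑' n, g1 n) + (∑' n, g2 n) + (∑' n, g3 n) + (∑' n, g4 n) + (∑' n, g5 n)
        + (∑' n, g6 n) := by
    rw [Summable.tsum_add ((((s1.add s2).add s3).add s4).add s5) s6,
      Summable.tsum_add (((s1.add s2).add s3).add s4) s5,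
      Summable.tsum_add ((s1.add s2).add s3) s4,
      Summable.tsum_add (s1.add s2) s3,
      Summable.tsum_add s1 s2]
  have T1 : (∑' n, g1 n) ≤ 2 * S := by
    refine le_trans (le_of_eq (tsum_congr (fun n => ?_))) (cross_sum hf ((1:ℤ),(0:ℤ))
      (by norm_num) (by norm_num))
    have he : n + ((1:ℤ),(0:ℤ)) = (n.1+1, n.2) := by simp [Prod.ext_iff]
    rw [hg1, he]
  have T2 : (∑' n, g2 n) ≤ 2 * S := by
    refine le_trans (le_of_eq (tsum_congr (fun n => ?_))) (cross_sum hf ((-1:ℤ),(0:ℤ))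
      (by norm_num) (by norm_num))
    have he : n + ((-1:ℤ),(0:ℤ)) = (n.1-1, n.2) := by simp [Prod.ext_iff]; ring
    rw [hg2, he]
  have T3 : (∑' n, g3 n) ≤ 2 * S := by
    refine le_trans (le_of_eq (tsum_congr (fun n => ?_))) (cross_sum hf ((0:ℤ),(1:ℤ))
      (by norm_num) (by norm_num))
    have he : n + ((0:ℤ),(1:ℤ)) = (n.1, n.2+1) := by simp [Prod.ext_iff]
    rw [hg3, he]
  have T4 : (∑' n, g4 n) ≤ 2 * S := by
    refine le_trans (le_of_eq (tsum_congr (fun n => ?_))) (cross_sum hf ((0:ℤ),(-1:ℤ))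
      (by norm_num) (by norm_num))
    have he : n + ((0:ℤ),(-1:ℤ)) = (n.1, n.2-1) := by simp [Prod.ext_iff]; ring
    rw [hg4, he]
  have T5 : (∑' n, g5 n) ≤ 2 * S := by
    refine le_trans (le_of_eq (tsum_congr (fun n => ?_))) (cross_sum hf ((-1:ℤ),(1:ℤ))
      (by norm_num) (by norm_num))
    have he : n + ((-1:ℤ),(1:ℤ)) = (n.1-1, n.2+1) := by simp [Prod.ext_iff]; ring
    rw [hg5, he]
  have T6 : (∑' n, g6 n) ≤ 2 * S := by
    refine le_trans (le_of_eq (tsum_congr (fun n => ?_))) (cross_sum hf ((1:ℤ),(-1:ℤ))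
      (by norm_num) (by norm_num))
    have he : n + ((1:ℤ),(-1:ℤ)) = (n.1+1, n.2-1) := by simp [Prod.ext_iff]; ring
    rw [hg6, he]
  calc ‖∑' n : ℤ × ℤ, (starRingEnd ℂ) (f n) * D n‖
      ≤ ∑' n : ℤ × ℤ, ‖(starRingEnd ℂ) (f n) * D n‖ := habs
    _ ≤ ∑' n : ℤ × ℤ, (g1 n + g2 n + g3 n + g4 n + g5 n + g6 n) := hstep
    _ = _ := hsplit
    _ ≤ 12 * S := by linarith
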